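/- Let r ≥ 3 be an integer, L = {0, 1/2, 1, ..., (r-2)/2}, H_{jk} = (-1)^{2j+2k} sin(π(2j+1)(2k+1)/r)/sin(π/r), dim_q j = H_{0j}, and N = Σ_{j∈L} (dim_q j)². Then the Fourier transform kernel A_{jk} = H_{jk}/dim_q j has explicit inverse B_{kl} = H_{kl} · dim_q l / N; that is, for all j, l ∈ L, Σ_{k∈L} (H_{jk}/dim_q j) · (H_{kl} · dim_q l / N) = δ_{jl}. -/

import Mathlib

open Real Finset

/-- The Fourier kernel `H a b` for spins indexed by integers `a = 2j`, `b = 2k`: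
`H_{jk} = (-1)^{2j+2k} sin(π(2j+1)(2k+1)/r)/sin(π/r)`. -/
noncomputable def HopfH (r a b : ℕ) : ℝ :=
  (-1) ^ (a + b) * Real.sin (π * (a + 1) * (b + 1) / r) / Real.sin (π / r)

/-- The quantum dimension `dim_q j = H_{0j}`, indexed by `a = 2j`. -/
noncomputable def dimq (r a : ℕ) : ℝ := HopfH r 0 a

/-- The normalisation constant `N = Σ_{j∈L} (dim_q j)²`. -/
noncomputable def Nconst (r : ℕ) : ℝ := ∑ a ∈ Finset.range (r - 1), (dimq r a) ^ 2

/-- Telescoping evaluation of `∑_{k<r} cos(πtk/r)` when `sin(πt/(2r)) ≠ 0`. -/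
lemma sum_cos_eq (r : ℕ) (hr : 0 < r) (t : ℤ)
    (h : Real.sin (π * t / (2 * r)) ≠ 0) :
    ∑ k ∈ Finset.range r, Real.cos (π * t * k / r) = (1 - (-1 : ℝ) ^ t) / 2 := by
  have hr0 : (r : ℝ) ≠ 0 := Nat.cast_ne_zero.mpr hr.ne'
  set θ : ℝ := π * t / r with hθ
  have hhalf : π * t / (2 * r) = θ / 2 := by rw [hθ]; ring
  rw [hhalf] at h
  have key : ∀ k : ℕ,
      (fun k : ℕ => Real.sin (((k : ℝ) - 1/2) * θ)) (k + 1)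
        - (fun k : ℕ => Real.sin (((k : ℝ) - 1/2) * θ)) k
      = 2 * Real.sin (θ / 2) * Real.cos (π * t * k / r) := by
    intro k
    simp only
    push_cast
    rw [Real.sin_sub_sin]
    have h1 : (((k : ℝ) + 1 - 1/2) * θ - ((k : ℝ) - 1/2) * θ) / 2 = θ / 2 := by ring
    have h2 : (((k : ℝ) + 1 - 1/2) * θ + ((k : ℝ) - 1/2) * θ) / 2 = π * t * k / r := by
      rw [hθ]; field_simp; ring
    rw [h1, h2]
  have tele := Finset.sum_range_sub (fun k : ℕ => Real.sin (((k : ℝ) - 1/2) * θ)) r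
  rw [Finset.sum_congr rfl fun k _ => key k] at tele
  have hrθ : ((r : ℝ) - 1/2) * θ = (t : ℝ) * π - θ / 2 := by
    rw [hθ]; field_simp
  have h0θ : ((0 : ℕ) : ℝ) - 1/2 = -(1/2 : ℝ) := by norm_num
  have hend : Real.sin (((r : ℝ) - 1/2) * θ) - Real.sin ((((0 : ℕ) : ℝ) - 1/2) * θ)
      = (1 - (-1 : ℝ) ^ t) * Real.sin (θ / 2) := by
    rw [hrθ, Real.sin_int_mul_pi_sub, h0θ]
    rw [show (-(1/2 : ℝ)) * θ = -(θ / 2) by ring, Real.sin_neg]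
    ring
  rw [hend] at tele
  rw [← Finset.mul_sum] at tele
  have t2 : ((∑ k ∈ Finset.range r, Real.cos (π * t * k / r)) * 2) * Real.sin (θ / 2)
      = (1 - (-1 : ℝ) ^ t) * Real.sin (θ / 2) := by linear_combination tele
  have t3 := mul_right_cancel₀ h t2
  linarith [t3]

lemma sin_half_ne (r : ℕ) (t : ℤ) (h0 : t ≠ 0) (h1 : t.natAbs < 2 * r) :
    Real.sin (π * t / (2 * r)) ≠ 0 := by
  have hr : 0 < r := by omega
  have key : ∀ s : ℤ, 0 < s → s.natAbs < 2 * r → 0 < Real.sin (π * s / (2 * r)) := by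
    intro s hs hs'
    apply Real.sin_pos_of_pos_of_lt_pi
    · have hs0 : (0 : ℝ) < (s : ℝ) := by exact_mod_cast hs
      have hr0 : (0 : ℝ) < 2 * (r : ℝ) := by positivity
      exact div_pos (mul_pos Real.pi_pos hs0) hr0
    · rw [div_lt_iff₀ (by positivity)]
      have hsI : s < 2 * (r : ℤ) := by omega
      have hsr : (s : ℝ) < 2 * r := by exact_mod_cast hsI
      nlinarith [Real.pi_pos]
  rcases lt_or_gt_of_ne h0 with hneg | hpos
  · have := key (-t) (by omega) (by simpa using h1)
    have heq : π * ((-t : ℤ) : ℝ) / (2 * r) = -(π * t / (2 * r)) := by push_cast; ring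
    rw [heq, Real.sin_neg] at this
    intro hc; rw [hc] at this; simp at this
  · exact (key t hpos h1).ne'

set_option maxHeartbeats 1000000 in
/-- Discrete orthogonality of sines. -/
lemma sin_orth (r : ℕ) (hr : 3 ≤ r) (m n : ℕ) (hm1 : 1 ≤ m) (hm2 : m ≤ r - 1)
    (hn1 : 1 ≤ n) (hn2 : n ≤ r - 1) :
    ∑ k ∈ Finset.range (r - 1),
        Real.sin (π * m * (k + 1) / r) * Real.sin (π * n * (k + 1) / r)
      = if m = n then (r : ℝ) / 2 else 0 := by
  have hr0 : 0 < r := by omega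
  have hsum : ∑ k ∈ Finset.range (r - 1),
      Real.sin (π * m * (k + 1) / r) * Real.sin (π * n * (k + 1) / r)
      = ∑ k ∈ Finset.range r, Real.sin (π * m * k / r) * Real.sin (π * n * k / r) := by
    have hrr : r - 1 + 1 = r := by omega
    have hsucc := Finset.sum_range_succ'
      (fun k : ℕ => Real.sin (π * m * k / r) * Real.sin (π * n * k / r)) (r - 1)
    rw [hrr] at hsucc
    rw [hsucc]
    simp only [Nat.cast_zero, mul_zero, zero_div, Real.sin_zero, zero_mul, mul_zero, add_zero]
    refine Finset.sum_congr rfl fun k _ => ?_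
    push_cast
    ring_nf
  have hprod : ∀ k : ℕ, Real.sin (π * m * k / r) * Real.sin (π * n * k / r) =
      (Real.cos (π * ((((m : ℤ) - (n : ℤ)) : ℤ) : ℝ) * k / r) - Real.cos (π * ((((m : ℤ) + (n : ℤ)) : ℤ) : ℝ) * k / r)) / 2 := by
    intro k
    rw [Real.cos_sub_cos]
    push_cast
    rw [show (π * ((m : ℝ) - n) * k / r + π * ((m : ℝ) + n) * k / r) / 2
        = π * m * k / r by ring]
    rw [show (π * ((m : ℝ) - n) * k / r - π * ((m : ℝ) + n) * k / r) / 2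
        = -(π * n * k / r) by ring]
    rw [Real.sin_neg]
    ring
  have hsplit : ∑ k ∈ Finset.range r, Real.sin (π * m * k / r) * Real.sin (π * n * k / r)
      = ((∑ k ∈ Finset.range r, Real.cos (π * ((((m : ℤ) - (n : ℤ)) : ℤ) : ℝ) * k / r))
        - ∑ k ∈ Finset.range r, Real.cos (π * ((((m : ℤ) + (n : ℤ)) : ℤ) : ℝ) * k / r)) / 2 := by
    rw [Finset.sum_congr rfl fun k _ => hprod k, ← Finset.sum_div, Finset.sum_sub_distrib]
  rw [hsum, hsplit]
  have hC2 : ∑ k ∈ Finset.range r, Real.cos (π * ((((m : ℤ) + (n : ℤ)) : ℤ) : ℝ) * k / r)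
      = (1 - (-1 : ℝ) ^ ((m : ℤ) + n)) / 2 := by
    exact sum_cos_eq r hr0 ((m : ℤ) + n) (sin_half_ne r ((m : ℤ) + n) (by omega) (by omega))
  by_cases hmn : m = n
  · subst hmn
    rw [hC2]
    have hC1 : ∑ k ∈ Finset.range r, Real.cos (π * ((((m : ℤ) - (m : ℤ)) : ℤ) : ℝ) * k / r) = r := by
      simp
    rw [hC1, if_pos rfl]
    have hpow : (-1 : ℝ) ^ ((m : ℤ) + m) = 1 := by
      rw [show (m : ℤ) + m = 2 * m by ring, zpow_mul]
      norm_num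
    rw [hpow]; ring
  · rw [hC2]
    have hC1 : ∑ k ∈ Finset.range r, Real.cos (π * ((((m : ℤ) - (n : ℤ)) : ℤ) : ℝ) * k / r)
        = (1 - (-1 : ℝ) ^ ((m : ℤ) - n)) / 2 := by
      exact sum_cos_eq r hr0 ((m : ℤ) - n) (sin_half_ne r ((m : ℤ) - n) (by omega) (by omega))
    rw [hC1, if_neg hmn]
    have hpar : (-1 : ℝ) ^ ((m : ℤ) - n) = (-1 : ℝ) ^ ((m : ℤ) + n) := by
      rw [show (m : ℤ) + n = ((m : ℤ) - n) + 2 * n by ring,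
        zpow_add₀ (by norm_num : (-1 : ℝ) ≠ 0), zpow_mul]
      norm_num
    rw [hpar]; ring

lemma sin_pos_nat (r m : ℕ) (hr : 3 ≤ r) (h1 : 1 ≤ m) (h2 : m ≤ r - 1) :
    0 < Real.sin (π * m / r) := by
  apply Real.sin_pos_of_pos_of_lt_pi
  · have hm : (0 : ℝ) < m := by exact_mod_cast h1
    have : (0 : ℝ) < r := by positivity
    positivity
  · rw [div_lt_iff₀ (by positivity)]
    have : (m : ℝ) < r := by exact_mod_cast (by omega : m < r)
    nlinarith [Real.pi_pos]

lemma sin_pi_div_pos (r : ℕ) (hr : 3 ≤ r) : 0 < Real.sin (π / r) := by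
  have := sin_pos_nat r 1 hr le_rfl (by omega)
  simpa using this

lemma Nconst_eq (r : ℕ) (hr : 3 ≤ r) :
    Nconst r = (r : ℝ) / (2 * Real.sin (π / r) ^ 2) := by
  have hs := sin_pi_div_pos r hr
  have key : ∑ a ∈ Finset.range (r - 1), (dimq r a) ^ 2
      = (∑ a ∈ Finset.range (r - 1),
          Real.sin (π * ((1 : ℕ) : ℝ) * (a + 1) / r) * Real.sin (π * ((1 : ℕ) : ℝ) * (a + 1) / r))
        / Real.sin (π / r) ^ 2 := by
    rw [Finset.sum_div]
    refine Finset.sum_congr rfl fun a _ => ?_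
    simp only [dimq, HopfH]
    rw [div_pow, mul_pow]
    rw [show ((-1 : ℝ) ^ (0 + a)) ^ 2 = 1 by
      rw [← pow_mul, mul_comm, pow_mul]; norm_num]
    push_cast
    ring_nf
  rw [Nconst, key, sin_orth r hr 1 1 le_rfl (by omega) le_rfl (by omega)]
  rw [if_pos rfl]
  field_simp
  try ring

lemma dimq_ne (r : ℕ) (hr : 3 ≤ r) (a : ℕ) (ha : a ≤ r - 2) : dimq r a ≠ 0 := by
  have hs := sin_pi_div_pos r hr
  have h1 := sin_pos_nat r (a + 1) hr (by omega) (by omega)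
  simp only [dimq, HopfH]
  push_cast at h1 ⊢
  rw [show π * (0 + 1) * ((a : ℝ) + 1) / r = π * ((a : ℝ) + 1) / r by ring]
  intro hc
  rcases mul_eq_zero.mp (div_eq_zero_iff.mp hc |>.resolve_right hs.ne') with h | h
  · exact pow_ne_zero _ (by norm_num : (-1 : ℝ) ≠ 0) h
  · exact h1.ne' h

/-- Explicit inverse of the Fourier transform kernel `A_{jk} = H_{jk}/dim_q j`:
`Σ_{k∈L} (H_{jk}/dim_q j) · (H_{kl} dim_q l / N) = δ_{jl}`. -/
theorem fourier_kernel_explicit_inverse (r : ℕ) (hr : 3 ≤ r)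
    (j l : ℕ) (hj : j ≤ r - 2) (hl : l ≤ r - 2) :
    ∑ k ∈ Finset.range (r - 1),
        (HopfH r j k / dimq r j) * (HopfH r k l * dimq r l / Nconst r)
      = (if j = l then (1 : ℝ) else 0) := by
  have hs := sin_pi_div_pos r hr
  have hdj := dimq_ne r hr j hj
  have hdl := dimq_ne r hr l hl
  have hN : Nconst r = (r : ℝ) / (2 * Real.sin (π / r) ^ 2) := Nconst_eq r hr
  have hNne : Nconst r ≠ 0 := by
    rw [hN]
    have : (0 : ℝ) < r := by positivity
    positivity
  set c : ℝ := (-1 : ℝ) ^ (j + l) * dimq r l / (dimq r j * Nconst r * Real.sin (π / r) ^ 2)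
    with hc
  have hterm : ∀ k : ℕ,
      (HopfH r j k / dimq r j) * (HopfH r k l * dimq r l / Nconst r)
      = c * (Real.sin (π * (j + 1) * (k + 1) / r) * Real.sin (π * (l + 1) * (k + 1) / r)) := by
    intro k
    have hsign : ((-1 : ℝ) ^ (j + k)) * ((-1 : ℝ) ^ (k + l)) = (-1 : ℝ) ^ (j + l) := by
      rw [← pow_add, show j + k + (k + l) = (j + l) + 2 * k by ring, pow_add, pow_mul]
      norm_num
    have hstep : (HopfH r j k / dimq r j) * (HopfH r k l * dimq r l / Nconst r)
        = (((-1 : ℝ) ^ (j + k)) * ((-1 : ℝ) ^ (k + l)))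
          * (Real.sin (π * (j + 1) * (k + 1) / r) * Real.sin (π * (k + 1) * (l + 1) / r)
            * dimq r l / (dimq r j * Nconst r * Real.sin (π / r) ^ 2)) := by
      simp only [HopfH]
      ring
    rw [hstep, hsign, hc]
    have harg : π * ((k : ℝ) + 1) * ((l : ℝ) + 1) / r
        = π * ((l : ℝ) + 1) * ((k : ℝ) + 1) / r := by ring
    rw [harg]
    ring
  rw [Finset.sum_congr rfl fun k _ => hterm k, ← Finset.mul_sum]
  have horth := sin_orth r hr (j + 1) (l + 1) (by omega) (by omega) (by omega) (by omega)
  have hcast : ∑ k ∈ Finset.range (r - 1),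
      Real.sin (π * (j + 1) * (k + 1) / r) * Real.sin (π * (l + 1) * (k + 1) / r)
      = ∑ k ∈ Finset.range (r - 1),
      Real.sin (π * ((j + 1 : ℕ) : ℝ) * (k + 1) / r) * Real.sin (π * ((l + 1 : ℕ) : ℝ) * (k + 1) / r) := by
    refine Finset.sum_congr rfl fun k _ => ?_
    push_cast; ring_nf
  rw [hcast, horth]
  by_cases hjl : j = l
  · subst hjl
    rw [if_pos rfl, if_pos rfl, hc, hN]
    have hpow : (-1 : ℝ) ^ (j + j) = 1 := by
      rw [show j + j = 2 * j by ring, pow_mul]; norm_num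
    rw [hpow]
    have hrne : (r : ℝ) ≠ 0 := by positivity
    field_simp
  · rw [if_neg (fun h => hjl (by omega)), if_neg hjl, mul_zero]
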